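/- For a set of atoms A with |A| > 1, two closed conditional expressions are provably equal in CP_rp if and only if they have the same reply and the same state transformation on every state in RP = {f : A⁺ → {T,F} | f(σaa) = f(σa) for all a ∈ A, σ ∈ A*}. -/

import Mathlib

inductive CE (A : Type) : Type
  | tt : CE A
  | ff : CE A
  | atom : A → CE A
  | cond : CE A → CE A → CE A → CE A

inductive Deriv {A : Type} (Ax : CE A → CE A → Prop) : CE A → CE A → Prop
  | ax {t t'} : Ax t t' → Deriv Ax t t'
  | refl (t) : Deriv Ax t t
  | symm {t t'} : Deriv Ax t t' → Deriv Ax t' t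
  | trans {t t' t''} : Deriv Ax t t' → Deriv Ax t' t'' → Deriv Ax t t''
  | congr {x x' y y' z z'} : Deriv Ax x x' → Deriv Ax y y' → Deriv Ax z z' →
      Deriv Ax (.cond x y z) (.cond x' y' z')
  | cp1 (x y) : Deriv Ax (.cond x .tt y) x
  | cp2 (x y) : Deriv Ax (.cond x .ff y) y
  | cp3 (x) : Deriv Ax (.cond .tt x .ff) x
  | cp4 (x y z u v) : Deriv Ax (.cond x (.cond y z u) v) (.cond (.cond x y v) z (.cond x u v))

/-- Derivability from the CP axioms alone (no extra axioms). -/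
def CP {A : Type} : CE A → CE A → Prop := Deriv (fun _ _ => False)

/-- The axiom schemes (CPrp1) and (CPrp2), for each atom a. -/
def AxRp {A : Type} : CE A → CE A → Prop := fun s t =>
  (∃ (a : A) (x y z : CE A),
      s = .cond (.cond x (.atom a) y) (.atom a) z ∧
      t = .cond (.cond x (.atom a) x) (.atom a) z) ∨
  (∃ (a : A) (x y z : CE A),
      s = .cond x (.atom a) (.cond y (.atom a) z) ∧
      t = .cond x (.atom a) (.cond z (.atom a) z))

/-- Nonempty strings of atoms (A⁺). -/
def NEStr (A : Type) := {l : List A // l ≠ []}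

/-- States: valuation functions f : A⁺ → {T,F}. -/
def StateF (A : Type) := NEStr A → Bool

mutual
/-- The reply `t ! f` of a conditional expression in state `f`. -/
def reply {A : Type} : CE A → StateF A → Bool
  | .tt, _ => true
  | .ff, _ => false
  | .atom a, f => f ⟨[a], by simp⟩
  | .cond x y z, f => if reply y f then reply x (applyCE y f) else reply z (applyCE y f)

/-- The state transformation `t • f` of a conditional expression. -/
def applyCE {A : Type} : CE A → StateF A → StateF A
  | .tt, f => f
  | .ff, f => f
  | .atom a, f => fun σ => f ⟨a :: σ.1, by simp⟩
  | .cond x y z, f => if reply y f then applyCE x (applyCE y f) else applyCE z (applyCE y f)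
end

/-- Repetition-proof states: f(σaa) = f(σa) for all atoms a and strings σ. -/
def RPset (A : Type) : Set (StateF A) :=
  {f | ∀ (σ : List A) (a : A), f ⟨σ ++ [a, a], by simp⟩ = f ⟨σ ++ [a], by simp⟩}

section Infra

open Classical

variable {A : Type}

lemma fEq (f : StateF A) {l l' : List A} (h : l ≠ []) (h' : l' ≠ []) (e : l = l') :
    f ⟨l, h⟩ = f ⟨l', h'⟩ := by subst e; rfl

lemma rp_spec {f : StateF A} (hf : f ∈ RPset A) (σ : List A) (a : A)
    (h : σ ++ [a, a] ≠ []) (h' : σ ++ [a] ≠ []) :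
    f ⟨σ ++ [a, a], h⟩ = f ⟨σ ++ [a], h'⟩ := hf σ a

/-- the trace (sequence of atoms queried) of an evaluation -/
def trace : CE A → StateF A → List A
  | .tt, _ => []
  | .ff, _ => []
  | .atom a, _ => [a]
  | .cond x y z, f =>
      trace y f ++ (if reply y f then trace x (applyCE y f) else trace z (applyCE y f))

lemma traceSpec : ∀ (t : CE A) (f : StateF A) (σ : List A) (h : σ ≠ []),
    applyCE t f ⟨σ, h⟩ = f ⟨trace t f ++ σ, by simp [h]⟩ := by
  intro t
  induction t with
  | tt => intro f σ h; rfl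
  | ff => intro f σ h; rfl
  | atom a => intro f σ h; rfl
  | cond x y z ihx ihy ihz =>
      intro f σ h
      by_cases hr : reply y f
      · have : applyCE (.cond x y z) f = applyCE x (applyCE y f) := by
          simp [applyCE, hr]
        rw [this, ihx, ihy]
        exact fEq _ _ _ (by simp [trace, hr])
      · have : applyCE (.cond x y z) f = applyCE z (applyCE y f) := by
          simp [applyCE, hr]
        rw [this, ihz, ihy]
        exact fEq _ _ _ (by simp [trace, hr])

lemma rp_apply {f : StateF A} (hf : f ∈ RPset A) (t : CE A) :
    applyCE t f ∈ RPset A := by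
  intro σ a
  rw [traceSpec, traceSpec]
  calc f ⟨trace t f ++ (σ ++ [a, a]), by simp⟩
      = f ⟨(trace t f ++ σ) ++ [a, a], by simp⟩ := fEq _ _ _ (by simp)
    _ = f ⟨(trace t f ++ σ) ++ [a], by simp⟩ := rp_spec hf _ _ _ _
    _ = f ⟨trace t f ++ (σ ++ [a]), by simp⟩ := fEq _ _ _ (by simp)

end Infra
section Sound

variable {A : Type}

/-- semantic equivalence over repetition-proof states -/
def semEq (t t' : CE A) : Prop :=
  ∀ f ∈ RPset A, reply t f = reply t' f ∧ applyCE t f = applyCE t' f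

lemma semEq_refl (t : CE A) : semEq t t := fun _ _ => ⟨rfl, rfl⟩

lemma semEq_symm {t t' : CE A} (h : semEq t t') : semEq t' t :=
  fun f hf => ⟨(h f hf).1.symm, (h f hf).2.symm⟩

lemma semEq_trans {t t' t'' : CE A} (h : semEq t t') (h' : semEq t' t'') : semEq t t'' :=
  fun f hf => ⟨(h f hf).1.trans (h' f hf).1, (h f hf).2.trans (h' f hf).2⟩

lemma semEq_cond {x x' y y' z z' : CE A} (hx : semEq x x') (hy : semEq y y')
    (hz : semEq z z') : semEq (.cond x y z) (.cond x' y' z') := by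
  intro f hf
  have hyf : applyCE y f ∈ RPset A := rp_apply hf y
  have e1 : reply y f = reply y' f := (hy f hf).1
  have e2 : applyCE y f = applyCE y' f := (hy f hf).2
  constructor
  · show (if reply y f then reply x (applyCE y f) else reply z (applyCE y f)) =
        (if reply y' f then reply x' (applyCE y' f) else reply z' (applyCE y' f))
    rw [← e1, ← e2]
    by_cases hr : reply y f
    · simp [reply, hr, (hx _ hyf).1]
    · simp [reply, hr, (hz _ hyf).1]
  · show (if reply y f then applyCE x (applyCE y f) else applyCE z (applyCE y f)) = _
    rw [show applyCE (.cond x' y' z') f =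
        (if reply y' f then applyCE x' (applyCE y' f) else applyCE z' (applyCE y' f)) from rfl,
      ← e1, ← e2]
    by_cases hr : reply y f
    · simp [hr, (hx _ hyf).2]
    · simp [hr, (hz _ hyf).2]

lemma atomSq {f : StateF A} (hf : f ∈ RPset A) (a : A) :
    applyCE (.atom a) f ⟨[a], by simp⟩ = f ⟨[a], by simp⟩ := by
  show f ⟨[a, a], by simp⟩ = f ⟨[a], by simp⟩
  have := hf [] a
  exact (fEq f _ _ rfl).trans (this.trans (fEq f _ _ rfl))

lemma sound_ax {s t : CE A} (h : AxRp s t) : semEq s t := by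
  rcases h with ⟨a, x, y, z, rfl, rfl⟩ | ⟨a, x, y, z, rfl, rfl⟩ <;>
  · intro f hf
    have haa : f ⟨[a, a], by simp⟩ = f ⟨[a], by simp⟩ := by
      have := hf [] a
      exact (fEq f _ _ rfl).trans (this.trans (fEq f _ _ rfl))
    by_cases hfa : f ⟨[a], by simp⟩ = true <;>
      constructor <;>
        simp [reply, applyCE, hfa, haa]

lemma sound_cp1 (x y : CE A) : semEq (.cond x .tt y) x := by
  intro f hf; constructor <;> simp [reply, applyCE]

lemma sound_cp2 (x y : CE A) : semEq (.cond x .ff y) y := by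
  intro f hf; constructor <;> simp [reply, applyCE]

lemma sound_cp3 (x : CE A) : semEq (.cond .tt x .ff) x := by
  intro f hf
  constructor
  · by_cases hr : reply x f <;> simp [reply, applyCE, hr]
  · by_cases hr : reply x f <;> simp [reply, applyCE, hr]

lemma sound_cp4 (x y z u v : CE A) :
    semEq (.cond x (.cond y z u) v) (.cond (.cond x y v) z (.cond x u v)) := by
  intro f hf
  by_cases h1 : reply z f
  · by_cases h2 : reply y (applyCE z f) <;>
      constructor <;> simp [reply, applyCE, h1, h2]
  · by_cases h2 : reply u (applyCE z f) <;>
      constructor <;> simp [reply, applyCE, h1, h2]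

lemma sound {t t' : CE A} (h : Deriv AxRp t t') : semEq t t' := by
  induction h with
  | ax h => exact sound_ax h
  | refl t => exact semEq_refl t
  | symm _ ih => exact semEq_symm ih
  | trans _ _ ih ih' => exact semEq_trans ih ih'
  | congr _ _ _ ihx ihy ihz => exact semEq_cond ihx ihy ihz
  | cp1 x y => exact sound_cp1 x y
  | cp2 x y => exact sound_cp2 x y
  | cp3 x => exact sound_cp3 x
  | cp4 x y z u v => exact sound_cp4 x y z u v

end Sound
section Norm

variable {A : Type}

inductive Basic : CE A → Prop
  | tt : Basic .tt
  | ff : Basic .ff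
  | cond {x y : CE A} {a : A} : Basic x → Basic y → Basic (.cond x (.atom a) y)

inductive Agood (a : A) : CE A → Prop
  | tt : Agood a .tt
  | ff : Agood a .ff
  | diff {b : A} {u v : CE A} : b ≠ a → Agood a (.cond u (.atom b) v)
  | same {u : CE A} : Agood a u → Agood a (.cond u (.atom a) u)

inductive Nrm : CE A → Prop
  | tt : Nrm .tt
  | ff : Nrm .ff
  | cond {a : A} {x y : CE A} : Nrm x → Nrm y → Agood a x → Agood a y →
      Nrm (.cond x (.atom a) y)

inductive ChainA (a : A) : CE A → Prop
  | tt : ChainA a .tt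
  | ff : ChainA a .ff
  | same {u : CE A} : ChainA a u → ChainA a (.cond u (.atom a) u)

def pushBF : CE A → CE A → CE A → CE A
  | .tt, X, _ => X
  | .ff, _, Z => Z
  | .cond b1 c b2, X, Z => .cond (pushBF b1 X Z) c (pushBF b2 X Z)
  | .atom _, X, _ => X

def toBF : CE A → CE A
  | .tt => .tt
  | .ff => .ff
  | .atom a => .cond .tt (.atom a) .ff
  | .cond x y z => pushBF (toBF y) (toBF x) (toBF z)

lemma pushBF_basic {b X Z : CE A} (hb : Basic b) (hX : Basic X) (hZ : Basic Z) :
    Basic (pushBF b X Z) := by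
  induction hb with
  | tt => exact hX
  | ff => exact hZ
  | cond h1 h2 ih1 ih2 => exact Basic.cond ih1 ih2

lemma toBF_basic (t : CE A) : Basic (toBF t) := by
  induction t with
  | tt => exact Basic.tt
  | ff => exact Basic.ff
  | atom a => exact Basic.cond Basic.tt Basic.ff
  | cond x y z ihx ihy ihz => exact pushBF_basic ihy ihx ihz

lemma deriv_pushBF (Ax : CE A → CE A → Prop) {b : CE A} (hb : Basic b) (X Z : CE A) :
    Deriv Ax (.cond X b Z) (pushBF b X Z) := by
  induction hb with
  | tt => exact Deriv.cp1 X Z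
  | ff => exact Deriv.cp2 X Z
  | @cond b1 b2 a h1 h2 ih1 ih2 =>
      exact Deriv.trans (Deriv.cp4 X b1 (.atom a) b2 Z)
        (Deriv.congr ih1 (Deriv.refl _) ih2)

lemma deriv_toBF (Ax : CE A → CE A → Prop) (t : CE A) : Deriv Ax t (toBF t) := by
  induction t with
  | tt => exact Deriv.refl _
  | ff => exact Deriv.refl _
  | atom a => exact Deriv.symm (Deriv.cp3 _)
  | cond x y z ihx ihy ihz =>
      exact Deriv.trans (Deriv.congr ihx ihy ihz)
        (deriv_pushBF Ax (toBF_basic y) (toBF x) (toBF z))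

open Classical in
noncomputable def Lfix (a : A) : CE A → CE A
  | .cond u (.atom b) v => if b = a then .cond u (.atom a) u else .cond u (.atom b) v
  | t => t

open Classical in
noncomputable def Rfix (a : A) : CE A → CE A
  | .cond u (.atom b) v => if b = a then .cond v (.atom a) v else .cond u (.atom b) v
  | t => t

noncomputable def rpN : CE A → CE A
  | .cond x (.atom a) y => .cond (Lfix a (rpN x)) (.atom a) (Rfix a (rpN y))
  | t => t

lemma Lfix_spec {a : A} {s : CE A} (hs : Nrm s) :
    Nrm (Lfix a s) ∧ Agood a (Lfix a s) := by
  cases hs with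
  | tt => exact ⟨Nrm.tt, Agood.tt⟩
  | ff => exact ⟨Nrm.ff, Agood.ff⟩
  | @cond b u v hu hv hgu hgv =>
      by_cases hb : b = a
      · subst hb
        rw [show Lfix b (.cond u (.atom b) v) = .cond u (.atom b) u from by simp [Lfix]]
        exact ⟨Nrm.cond hu hu hgu hgu, Agood.same hgu⟩
      · rw [show Lfix a (.cond u (.atom b) v) = .cond u (.atom b) v from by simp [Lfix, hb]]
        exact ⟨Nrm.cond hu hv hgu hgv, Agood.diff hb⟩

lemma Rfix_spec {a : A} {s : CE A} (hs : Nrm s) :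
    Nrm (Rfix a s) ∧ Agood a (Rfix a s) := by
  cases hs with
  | tt => exact ⟨Nrm.tt, Agood.tt⟩
  | ff => exact ⟨Nrm.ff, Agood.ff⟩
  | @cond b u v hu hv hgu hgv =>
      by_cases hb : b = a
      · subst hb
        rw [show Rfix b (.cond u (.atom b) v) = .cond v (.atom b) v from by simp [Rfix]]
        exact ⟨Nrm.cond hv hv hgv hgv, Agood.same hgv⟩
      · rw [show Rfix a (.cond u (.atom b) v) = .cond u (.atom b) v from by simp [Rfix, hb]]
        exact ⟨Nrm.cond hu hv hgu hgv, Agood.diff hb⟩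

lemma deriv_Lfix (a : A) {X : CE A} (hX : Nrm X) (Z : CE A) :
    Deriv AxRp (.cond X (.atom a) Z) (.cond (Lfix a X) (.atom a) Z) := by
  cases hX with
  | tt => exact Deriv.refl _
  | ff => exact Deriv.refl _
  | @cond b u v hu hv hgu hgv =>
      by_cases hb : b = a
      · subst hb
        rw [show Lfix b (.cond u (.atom b) v) = .cond u (.atom b) u from by simp [Lfix]]
        exact Deriv.ax (Or.inl ⟨b, u, v, Z, rfl, rfl⟩)
      · rw [show Lfix a (.cond u (.atom b) v) = .cond u (.atom b) v from by simp [Lfix, hb]]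
        exact Deriv.refl _

lemma deriv_Rfix (a : A) (X : CE A) {Z : CE A} (hZ : Nrm Z) :
    Deriv AxRp (.cond X (.atom a) Z) (.cond X (.atom a) (Rfix a Z)) := by
  cases hZ with
  | tt => exact Deriv.refl _
  | ff => exact Deriv.refl _
  | @cond b u v hu hv hgu hgv =>
      by_cases hb : b = a
      · subst hb
        rw [show Rfix b (.cond u (.atom b) v) = .cond v (.atom b) v from by simp [Rfix]]
        exact Deriv.ax (Or.inr ⟨b, X, u, v, rfl, rfl⟩)
      · rw [show Rfix a (.cond u (.atom b) v) = .cond u (.atom b) v from by simp [Rfix, hb]]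
        exact Deriv.refl _

lemma rpN_nrm {t : CE A} (ht : Basic t) : Nrm (rpN t) := by
  induction ht with
  | tt => exact Nrm.tt
  | ff => exact Nrm.ff
  | @cond x y a hx hy ihx ihy =>
      rw [show rpN (.cond x (.atom a) y) = .cond (Lfix a (rpN x)) (.atom a) (Rfix a (rpN y))
        from rfl]
      exact Nrm.cond (Lfix_spec ihx).1 (Rfix_spec ihy).1 (Lfix_spec ihx).2 (Rfix_spec ihy).2

lemma rpN_deriv {t : CE A} (ht : Basic t) : Deriv AxRp t (rpN t) := by
  induction ht with
  | tt => exact Deriv.refl _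
  | ff => exact Deriv.refl _
  | @cond x y a hx hy ihx ihy =>
      rw [show rpN (.cond x (.atom a) y) = .cond (Lfix a (rpN x)) (.atom a) (Rfix a (rpN y))
        from rfl]
      refine Deriv.trans (Deriv.congr ihx (Deriv.refl _) ihy) ?_
      refine Deriv.trans (deriv_Lfix a (rpN_nrm hx) (rpN y)) ?_
      exact deriv_Rfix a _ (rpN_nrm hy)

noncomputable def nf (t : CE A) : CE A := rpN (toBF t)

lemma nf_nrm (t : CE A) : Nrm (nf t) := rpN_nrm (toBF_basic t)

lemma nf_deriv (t : CE A) : Deriv AxRp t (nf t) :=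
  Deriv.trans (deriv_toBF _ t) (rpN_deriv (toBF_basic t))

end Norm
section States

open Classical

variable {A : Type}

/-- the state that replies `b` on pure-`a` strings and `!b` otherwise -/
noncomputable def pureSt (a : A) (b : Bool) : StateF A :=
  fun τ => if ∀ c ∈ τ.1, c = a then b else !b

/-- flip the values of `g` on pure-`a` strings to `b` -/
noncomputable def pF (a : A) (b : Bool) (g : StateF A) : StateF A :=
  fun τ => if ∀ c ∈ τ.1, c = a then b else g τ

noncomputable def liftAux (a : A) (b : Bool) (g : StateF A) : List A → Bool
  | [] => b
  | c :: ρ => if c = a then (if h : ρ = [] then b else g ⟨ρ, h⟩) else b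

/-- a state `f` with `a • f = g` and `f(a) = b` (valid when `g ∈ RP`, `g(a) = b`) -/
noncomputable def liftSt (a : A) (b : Bool) (g : StateF A) : StateF A :=
  fun τ => liftAux a b g τ.1

noncomputable def memSt (a : A) : StateF A := fun τ => if a ∈ τ.1 then false else true

noncomputable def headSt (a : A) : StateF A := fun τ => if τ.1.head? = some a then true else false

lemma pure_snoc (a e : A) (σ : List A) :
    ((∀ c ∈ σ ++ [e, e], c = a) ↔ (∀ c ∈ σ ++ [e], c = a)) := by
  simp only [List.forall_mem_append]
  simp

lemma pureSt_rp (a : A) (b : Bool) : pureSt a b ∈ RPset A := by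
  intro σ e
  simp only [pureSt]
  by_cases h : ∀ c ∈ σ ++ [e], c = a
  · rw [if_pos ((pure_snoc a e σ).2 h), if_pos h]
  · rw [if_neg (fun hh => h ((pure_snoc a e σ).1 hh)), if_neg h]

lemma pF_rp (a : A) (b : Bool) {g : StateF A} (hg : g ∈ RPset A) : pF a b g ∈ RPset A := by
  intro σ e
  simp only [pF]
  by_cases h : ∀ c ∈ σ ++ [e], c = a
  · rw [if_pos ((pure_snoc a e σ).2 h), if_pos h]
  · rw [if_neg (fun hh => h ((pure_snoc a e σ).1 hh)), if_neg h]
    exact hg σ e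

lemma memSt_rp (a : A) : memSt a ∈ RPset A := by
  intro σ e
  simp only [memSt]
  by_cases h : a ∈ σ ++ [e]
  · rw [if_pos (by simpa using by simpa using h : a ∈ σ ++ [e, e]), if_pos h]
  · have h2 : a ∉ σ ++ [e, e] := by
      simp only [List.mem_append, List.mem_cons, List.mem_singleton] at h ⊢
      tauto
    rw [if_neg h2, if_neg h]

lemma headSt_rp (a : A) : headSt a ∈ RPset A := by
  intro σ e
  have : (σ ++ [e, e]).head? = (σ ++ [e]).head? := by
    cases σ <;> simp
  simp only [headSt, this]

lemma liftSt_rp {a : A} {b : Bool} {g : StateF A} (hg : g ∈ RPset A)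
    (hga : g ⟨[a], by simp⟩ = b) : liftSt a b g ∈ RPset A := by
  intro σ e
  show liftAux a b g (σ ++ [e, e]) = liftAux a b g (σ ++ [e])
  cases σ with
  | nil =>
      show liftAux a b g [e, e] = liftAux a b g [e]
      by_cases he : e = a
      · subst he
        simpa [liftAux] using hga
      · simp [liftAux, he]
  | cons c σ₀ =>
      show liftAux a b g (c :: (σ₀ ++ [e, e])) = liftAux a b g (c :: (σ₀ ++ [e]))
      by_cases hc : c = a
      · simp only [liftAux]
        rw [if_pos hc, if_pos hc, dif_neg (show ¬ σ₀ ++ [e, e] = [] by simp),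
          dif_neg (show ¬ σ₀ ++ [e] = [] by simp)]
        exact hg σ₀ e
      · simp only [liftAux]
        rw [if_neg hc, if_neg hc]

lemma liftSt_apply (a : A) (b : Bool) (g : StateF A) :
    applyCE (.atom a) (liftSt a b g) = g := by
  funext τ
  obtain ⟨l, hl⟩ := τ
  show liftAux a b g (a :: l) = g ⟨l, hl⟩
  simp [liftAux, hl]

lemma liftSt_val (a : A) (b : Bool) (g : StateF A) :
    liftSt a b g ⟨[a], by simp⟩ = b := by
  show liftAux a b g [a] = b
  simp [liftAux]

lemma pF_val (a : A) (b : Bool) (g : StateF A) : pF a b g ⟨[a], by simp⟩ = b := by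
  simp [pF]

lemma pF_nonpure (a : A) (b : Bool) (g : StateF A) {l : List A} (hl : l ≠ [])
    (h : ¬ ∀ c ∈ l, c = a) : pF a b g ⟨l, hl⟩ = g ⟨l, hl⟩ := by
  simp only [pF]
  rw [if_neg h]

lemma pF_atom_comm (a : A) (b : Bool) (g : StateF A) :
    applyCE (.atom a) (pF a b g) = pF a b (applyCE (.atom a) g) := by
  funext τ
  obtain ⟨l, hl⟩ := τ
  show (if ∀ c ∈ a :: l, c = a then b else g ⟨a :: l, by simp⟩)
      = (if ∀ c ∈ l, c = a then b else g ⟨a :: l, by simp⟩)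
  by_cases h : ∀ c ∈ l, c = a
  · rw [if_pos (by simpa using h), if_pos h]
  · rw [if_neg (fun hh => h fun c hc => hh c (List.mem_cons_of_mem a hc)), if_neg h]

lemma pF_atom_diff {a c : A} (hc : c ≠ a) (b : Bool) (g : StateF A) :
    applyCE (.atom c) (pF a b g) = applyCE (.atom c) g := by
  funext τ
  obtain ⟨l, hl⟩ := τ
  show (if ∀ e ∈ c :: l, e = a then b else g ⟨c :: l, by simp⟩) = g ⟨c :: l, by simp⟩
  rw [if_neg (by intro h; exact hc (h c (by simp)))]

lemma pF_atom_val {a c : A} (hc : c ≠ a) (b : Bool) (g : StateF A) :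
    pF a b g ⟨[c], by simp⟩ = g ⟨[c], by simp⟩ := by
  simp only [pF]
  rw [if_neg (by intro h; exact hc (h c (by simp)))]

end States
section Transfer

variable {A : Type}

lemma reply_cond (u v : CE A) (e : A) (h : StateF A) :
    reply (.cond u (.atom e) v) h =
      if h ⟨[e], by simp⟩ then reply u (applyCE (.atom e) h) else reply v (applyCE (.atom e) h) := rfl

lemma trace_cond (u v : CE A) (e : A) (h : StateF A) :
    trace (.cond u (.atom e) v) h =
      e :: (if h ⟨[e], by simp⟩ then trace u (applyCE (.atom e) h)
        else trace v (applyCE (.atom e) h)) := by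
  simp [trace, reply]
  by_cases hh : h ⟨[e], by simp⟩ = true <;> simp [hh]

lemma reply_same (u : CE A) (e : A) (h : StateF A) :
    reply (.cond u (.atom e) u) h = reply u (applyCE (.atom e) h) := by
  rw [reply_cond]; split <;> rfl

lemma trace_same (u : CE A) (e : A) (h : StateF A) :
    trace (.cond u (.atom e) u) h = e :: trace u (applyCE (.atom e) h) := by
  rw [trace_cond]; split <;> rfl

lemma transfer (a : A) (b : Bool) :
    ∀ x : CE A, Nrm x → Agood a x → ∀ g : StateF A,
      reply x (pF a b g) = reply x g ∧ trace x (pF a b g) = trace x g := by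
  intro x
  induction x with
  | tt => intro _ _ g; exact ⟨rfl, rfl⟩
  | ff => intro _ _ g; exact ⟨rfl, rfl⟩
  | atom c => intro hN _ g; cases hN
  | cond u y v ihu ihy ihv =>
      intro hN hG g
      cases hN with
      | @cond e _ _ hNu hNv hgu hgv =>
          cases hG with
          | diff hne =>
              have h1 := pF_atom_val hne b g
              have h2 := pF_atom_diff hne b g
              rw [reply_cond, reply_cond, trace_cond, trace_cond, h1, h2]
              exact ⟨rfl, rfl⟩
          | same hAu =>
              constructor
              · rw [reply_same, reply_same, pF_atom_comm]
                exact (ihu hNu hAu (applyCE (.atom a) g)).1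
              · rw [trace_same, trace_same, pF_atom_comm]
                rw [(ihu hNu hAu (applyCE (.atom a) g)).2]

lemma chain_spec {a : A} {x : CE A} (h : ChainA a x) :
    ∃ (m : ℕ) (ℓ : Bool), ∀ g : StateF A, reply x g = ℓ ∧ trace x g = List.replicate m a := by
  induction h with
  | tt => exact ⟨0, true, fun g => ⟨rfl, rfl⟩⟩
  | ff => exact ⟨0, false, fun g => ⟨rfl, rfl⟩⟩
  | @same u _ ih =>
      obtain ⟨m, ℓ, hs⟩ := ih
      refine ⟨m + 1, ℓ, fun g => ?_⟩
      rw [reply_same, trace_same]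
      exact ⟨(hs _).1, by rw [(hs _).2, List.replicate_succ]⟩

lemma nonchain_trace {a : A} :
    ∀ x : CE A, Nrm x → Agood a x → ¬ ChainA a x →
      ∀ g : StateF A, ∃ c, c ∈ trace x g ∧ c ≠ a := by
  intro x
  induction x with
  | tt => intro _ _ hC _; exact absurd ChainA.tt hC
  | ff => intro _ _ hC _; exact absurd ChainA.ff hC
  | atom c => intro hN _ _ _; cases hN
  | cond u y v ihu ihy ihv =>
      intro hN hG hC g
      cases hN with
      | @cond e _ _ hNu hNv hgu hgv =>
          cases hG with
          | diff hne =>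
              exact ⟨e, by rw [trace_cond]; exact List.mem_cons_self, hne⟩
          | same hAu =>
              have hCu : ¬ ChainA a u := fun hc => hC (ChainA.same hc)
              obtain ⟨c, hc1, hc2⟩ := ihu hNu hAu hCu (applyCE (.atom a) g)
              exact ⟨c, by rw [trace_same]; exact List.mem_cons_of_mem _ hc1, hc2⟩

lemma collapse {f : StateF A} (hf : f ∈ RPset A) (a : A) :
    ∀ (k : ℕ) (w : List A) (h : w ++ List.replicate (k+1) a ≠ []) (h' : w ++ [a] ≠ []),
      f ⟨w ++ List.replicate (k+1) a, h⟩ = f ⟨w ++ [a], h'⟩ := by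
  intro k
  induction k with
  | zero => intro w h h'; exact fEq f _ _ rfl
  | succ k ih =>
      intro w h h'
      have e1 : w ++ List.replicate (k+2) a = (w ++ List.replicate k a) ++ [a, a] := by
        rw [show k + 2 = k + (1 + 1) from rfl, List.replicate_add]
        simp
      have e2 : (w ++ List.replicate k a) ++ [a] = w ++ List.replicate (k+1) a := by
        rw [List.replicate_succ']
        simp
      calc f ⟨w ++ List.replicate (k+2) a, h⟩
          = f ⟨(w ++ List.replicate k a) ++ [a, a], by simp⟩ := fEq f _ _ e1
        _ = f ⟨(w ++ List.replicate k a) ++ [a], by simp⟩ := rp_spec hf _ _ _ _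
        _ = f ⟨w ++ List.replicate (k+1) a, by simp⟩ := fEq f _ _ e2
        _ = f ⟨w ++ [a], h'⟩ := ih w _ _

lemma pure_eq_replicate {a : A} {l : List A} (h : ∀ c ∈ l, c = a) :
    l = List.replicate l.length a :=
  List.eq_replicate_iff.2 ⟨rfl, h⟩

end Transfer
section Key

variable {A : Type}

lemma applyCE_cond (u v : CE A) (e : A) (h : StateF A) :
    applyCE (.cond u (.atom e) v) h =
      if h ⟨[e], by simp⟩ then applyCE u (applyCE (.atom e) h)
      else applyCE v (applyCE (.atom e) h) := rfl

lemma mixed_contra (a : A) (b : Bool) {x x' : CE A}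
    (hNx : Nrm x) (hGx : Agood a x) (hcx : ¬ ChainA a x) (hcx' : ChainA a x')
    (H : ∀ g ∈ RPset A, g ⟨[a], by simp⟩ = b →
        reply x g = reply x' g ∧ applyCE x g = applyCE x' g) : False := by
  have hrp : pureSt a b ∈ RPset A := pureSt_rp a b
  have hval : pureSt a b ⟨[a], by simp⟩ = b := by simp [pureSt]
  have Ha := (H (pureSt a b) hrp hval).2
  have e := congrFun Ha ⟨[a], by simp⟩
  rw [traceSpec, traceSpec] at e
  obtain ⟨c, hc1, hc2⟩ := nonchain_trace x hNx hGx hcx (pureSt a b)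
  have ex : pureSt a b ⟨trace x (pureSt a b) ++ [a], by simp⟩ = !b := by
    simp only [pureSt]
    rw [if_neg (fun hh => hc2 (hh c (by simp [hc1])))]
  obtain ⟨m, ℓ, hs⟩ := chain_spec hcx'
  have ex' : pureSt a b ⟨trace x' (pureSt a b) ++ [a], by simp⟩ = b := by
    have e2 : pureSt a b ⟨trace x' (pureSt a b) ++ [a], by simp⟩
        = pureSt a b ⟨List.replicate m a ++ [a], by simp⟩ :=
      fEq _ _ _ (by rw [(hs _).2])
    rw [e2]
    simp only [pureSt]
    rw [if_pos]
    intro d hd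
    rcases List.mem_append.1 hd with h1 | h1
    · exact List.eq_of_mem_replicate h1
    · simpa using h1
  rw [ex, ex'] at e
  simp at e

lemma keyLemma (a : A) (b : Bool) {x x' : CE A}
    (hNx : Nrm x) (hGx : Agood a x) (hNx' : Nrm x') (hGx' : Agood a x')
    (H : ∀ g ∈ RPset A, g ⟨[a], by simp⟩ = b →
        reply x g = reply x' g ∧ applyCE x g = applyCE x' g) :
    ∀ g ∈ RPset A, reply x g = reply x' g ∧ applyCE x g = applyCE x' g := by
  intro g hg
  by_cases hga : g ⟨[a], by simp⟩ = b
  · exact H g hg hga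
  · have hgs : pF a b g ∈ RPset A := pF_rp a b hg
    have hvs : pF a b g ⟨[a], by simp⟩ = b := pF_val a b g
    have Hs := H (pF a b g) hgs hvs
    have tx := transfer a b x hNx hGx g
    have tx' := transfer a b x' hNx' hGx' g
    have core : ∀ (l : List A) (hl : l ≠ []),
        ¬ (∀ c ∈ trace x g ++ l, c = a) → ¬ (∀ c ∈ trace x' g ++ l, c = a) →
        g ⟨trace x g ++ l, by simp [hl]⟩ = g ⟨trace x' g ++ l, by simp [hl]⟩ := by
      intro l hl np1 np2
      calc g ⟨trace x g ++ l, by simp [hl]⟩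
          = pF a b g ⟨trace x g ++ l, by simp [hl]⟩ := (pF_nonpure a b g _ np1).symm
        _ = pF a b g ⟨trace x (pF a b g) ++ l, by simp [hl]⟩ := fEq _ _ _ (by rw [tx.2])
        _ = applyCE x (pF a b g) ⟨l, hl⟩ := (traceSpec x (pF a b g) l hl).symm
        _ = applyCE x' (pF a b g) ⟨l, hl⟩ := by rw [Hs.2]
        _ = pF a b g ⟨trace x' (pF a b g) ++ l, by simp [hl]⟩ := traceSpec x' (pF a b g) l hl
        _ = pF a b g ⟨trace x' g ++ l, by simp [hl]⟩ := fEq _ _ _ (by rw [tx'.2])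
        _ = g ⟨trace x' g ++ l, by simp [hl]⟩ := pF_nonpure a b g _ np2
    constructor
    · rw [← tx.1, ← tx'.1]; exact Hs.1
    · funext τ
      obtain ⟨l, hl⟩ := τ
      rw [traceSpec, traceSpec]
      by_cases hp : ∀ c ∈ l, c = a
      · -- pure case: reduce to [a]
        have hrep := pure_eq_replicate hp
        obtain ⟨k, hk⟩ : ∃ k, l.length = k + 1 := by
          cases l with
          | nil => exact absurd rfl hl
          | cons c l0 => exact ⟨l0.length, by simp⟩
        have redx : ∀ (w : List A) (hw : w ++ l ≠ []) (hw' : w ++ [a] ≠ []),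
            g ⟨w ++ l, hw⟩ = g ⟨w ++ [a], hw'⟩ := by
          intro w hw hw'
          calc g ⟨w ++ l, hw⟩
              = g ⟨w ++ List.replicate (k+1) a, by simp⟩ :=
                fEq g _ _ (by rw [← hk, ← hrep])
            _ = g ⟨w ++ [a], hw'⟩ := collapse hg a k w _ _
        rw [redx (trace x g) (by simp [hl]) (by simp), redx (trace x' g) (by simp [hl]) (by simp)]
        by_cases hcx : ChainA a x
        · by_cases hcx' : ChainA a x'
          · -- both chains: both sides equal g⟨[a]⟩
            obtain ⟨m, ℓ, hs⟩ := chain_spec hcx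
            obtain ⟨m', ℓ', hs'⟩ := chain_spec hcx'
            have e1 : ∀ (t : CE A) (mm : ℕ), trace t g = List.replicate mm a →
                ∀ (h : trace t g ++ [a] ≠ []),
                g ⟨trace t g ++ [a], h⟩ = g ⟨[a], by simp⟩ := by
              intro t mm ht h
              calc g ⟨trace t g ++ [a], h⟩
                  = g ⟨([] : List A) ++ List.replicate (mm+1) a, by simp⟩ :=
                    fEq g _ _ (by rw [ht]; simp [List.replicate_succ'])
                _ = g ⟨([] : List A) ++ [a], by simp⟩ := collapse hg a mm [] _ _
                _ = g ⟨[a], by simp⟩ := fEq g _ _ (by simp)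
            rw [e1 x m (hs g).2 _, e1 x' m' (hs' g).2 _]
          · exact absurd (mixed_contra a b hNx' hGx' hcx' hcx
              (fun g hg hga => ⟨((H g hg hga).1).symm, ((H g hg hga).2).symm⟩)) id
        · by_cases hcx' : ChainA a x'
          · exact absurd (mixed_contra a b hNx hGx hcx hcx' H) id
          · -- both nonchain
            obtain ⟨c, hc1, hc2⟩ := nonchain_trace x hNx hGx hcx g
            obtain ⟨c', hc1', hc2'⟩ := nonchain_trace x' hNx' hGx' hcx' g
            exact core [a] (by simp) (fun hh => hc2 (hh c (by simp [hc1])))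
              (fun hh => hc2' (hh c' (by simp [hc1'])))
      · -- non-pure case
        exact core l hl (fun hh => hp (fun c hc => hh c (by simp [hc])))
          (fun hh => hp (fun c hc => hh c (by simp [hc])))

end Key
section Master

variable {A : Type}

def sz : CE A → ℕ
  | .cond x y z => sz x + sz y + sz z + 1
  | _ => 1

lemma sz_pos (t : CE A) : 1 ≤ sz t := by
  cases t <;> simp [sz]

lemma constTrue_rp : (fun _ => true : StateF A) ∈ RPset A := fun _ _ => rfl

lemma not_semEq_tt_ff : ¬ semEq (CE.tt : CE A) .ff := by
  intro h
  have := (h (fun _ => true) constTrue_rp).1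
  simp [reply] at this

lemma leaf_apply {x : CE A} (hx : x = .tt ∨ x = .ff) (f : StateF A) : applyCE x f = f := by
  rcases hx with rfl | rfl <;> rfl

lemma trace_cons (u v : CE A) (e : A) (f : StateF A) :
    ∃ r, trace (.cond u (.atom e) v) f = e :: r :=
  ⟨_, trace_cond u v e f⟩

lemma not_semEq_leaf_cond (hA : ∀ a : A, ∃ b, b ≠ a) {x : CE A} (hx : x = .tt ∨ x = .ff)
    (u v : CE A) (a : A) : ¬ semEq x (.cond u (.atom a) v) := by
  intro h
  obtain ⟨b, hb⟩ := hA a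
  have happ := (h (memSt a) (memSt_rp a)).2
  have e := congrFun happ ⟨[b], by simp⟩
  rw [leaf_apply hx, traceSpec] at e
  have h1 : memSt a ⟨[b], by simp⟩ = true := by
    simp only [memSt]
    rw [if_neg (show a ∉ [b] by simpa using Ne.symm hb)]
  have h2 : memSt a ⟨trace (.cond u (.atom a) v) (memSt a) ++ [b], by simp⟩ = false := by
    obtain ⟨r, hr⟩ := trace_cons u v a (memSt a)
    have e2 : memSt a ⟨trace (.cond u (.atom a) v) (memSt a) ++ [b], by simp⟩
        = memSt a ⟨a :: (r ++ [b]), by simp⟩ := fEq _ _ _ (by rw [hr]; rfl)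
    rw [e2]
    simp only [memSt]
    rw [if_pos (by simp)]
  rw [h1, h2] at e
  exact Bool.noConfusion e

open Classical in
lemma headSt_cons_self (a : A) (l : List A) (h : a :: l ≠ []) :
    headSt a ⟨a :: l, h⟩ = true := by
  simp [headSt]

open Classical in
lemma headSt_cons_ne {a c : A} (hc : c ≠ a) (l : List A) (h : c :: l ≠ []) :
    headSt a ⟨c :: l, h⟩ = false := by
  simp [headSt, hc]

lemma not_semEq_cond_cond_ne {a b : A} (hab : a ≠ b) (u v u' v' : CE A) :
    ¬ semEq (.cond u (.atom a) v) (.cond u' (.atom b) v') := by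
  intro h
  have happ := (h (headSt a) (headSt_rp a)).2
  have e := congrFun happ ⟨[a], by simp⟩
  rw [traceSpec, traceSpec] at e
  obtain ⟨r, hr⟩ := trace_cons u v a (headSt a)
  obtain ⟨r', hr'⟩ := trace_cons u' v' b (headSt a)
  have h1 : headSt a ⟨trace (.cond u (.atom a) v) (headSt a) ++ [a], by simp⟩ = true := by
    have e2 : headSt a ⟨trace (.cond u (.atom a) v) (headSt a) ++ [a], by simp⟩
        = headSt a ⟨a :: (r ++ [a]), by simp⟩ := fEq _ _ _ (by rw [hr]; rfl)
    rw [e2, headSt_cons_self]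
  have h2 : headSt a ⟨trace (.cond u' (.atom b) v') (headSt a) ++ [a], by simp⟩ = false := by
    have e2 : headSt a ⟨trace (.cond u' (.atom b) v') (headSt a) ++ [a], by simp⟩
        = headSt a ⟨b :: (r' ++ [a]), by simp⟩ := fEq _ _ _ (by rw [hr']; rfl)
    rw [e2, headSt_cons_ne (fun hh => hab hh.symm)]
  rw [h1, h2] at e
  exact Bool.noConfusion e

lemma semEq_x_of_cond {a : A} {x y x' y' : CE A}
    (h : semEq (.cond x (.atom a) y) (.cond x' (.atom a) y')) :
    ∀ g ∈ RPset A, g ⟨[a], by simp⟩ = true →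
      reply x g = reply x' g ∧ applyCE x g = applyCE x' g := by
  intro g hg hga
  have hf : liftSt a true g ∈ RPset A := liftSt_rp hg hga
  have hsf := h _ hf
  have hval : liftSt a true g ⟨[a], by simp⟩ = true := liftSt_val a true g
  have happ : applyCE (.atom a) (liftSt a true g) = g := liftSt_apply a true g
  constructor
  · have h1 := hsf.1
    rw [reply_cond, reply_cond, hval, happ] at h1
    simpa using h1
  · have h1 := hsf.2
    rw [applyCE_cond, applyCE_cond, hval, happ] at h1
    simpa using h1

lemma semEq_y_of_cond {a : A} {x y x' y' : CE A}
    (h : semEq (.cond x (.atom a) y) (.cond x' (.atom a) y')) :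
    ∀ g ∈ RPset A, g ⟨[a], by simp⟩ = false →
      reply y g = reply y' g ∧ applyCE y g = applyCE y' g := by
  intro g hg hga
  have hf : liftSt a false g ∈ RPset A := liftSt_rp hg hga
  have hsf := h _ hf
  have hval : liftSt a false g ⟨[a], by simp⟩ = false := liftSt_val a false g
  have happ : applyCE (.atom a) (liftSt a false g) = g := liftSt_apply a false g
  constructor
  · have h1 := hsf.1
    rw [reply_cond, reply_cond, hval, happ] at h1
    simpa using h1
  · have h1 := hsf.2
    rw [applyCE_cond, applyCE_cond, hval, happ] at h1
    simpa using h1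

lemma inj (hA : ∀ a : A, ∃ b, b ≠ a) :
    ∀ N, ∀ x y : CE A, sz x + sz y ≤ N → Nrm x → Nrm y → semEq x y → x = y := by
  intro N
  induction N with
  | zero =>
      intro x y hsz
      have := sz_pos x
      omega
  | succ N ih =>
      intro x y hsz hNx hNy hsem
      cases hNx with
      | tt =>
          cases hNy with
          | tt => rfl
          | ff => exact absurd hsem not_semEq_tt_ff
          | cond _ _ _ _ => exact absurd hsem (not_semEq_leaf_cond hA (Or.inl rfl) _ _ _)
      | ff =>
          cases hNy with
          | tt => exact absurd (semEq_symm hsem) not_semEq_tt_ff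
          | ff => rfl
          | cond _ _ _ _ => exact absurd hsem (not_semEq_leaf_cond hA (Or.inr rfl) _ _ _)
      | @cond a x1 y1 hNx1 hNy1 hGx1 hGy1 =>
          cases hNy with
          | tt => exact absurd (semEq_symm hsem) (not_semEq_leaf_cond hA (Or.inl rfl) _ _ _)
          | ff => exact absurd (semEq_symm hsem) (not_semEq_leaf_cond hA (Or.inr rfl) _ _ _)
          | @cond a' x2 y2 hNx2 hNy2 hGx2 hGy2 =>
              by_cases ha : a = a'
              · subst ha
                have Hx := semEq_x_of_cond hsem
                have Hy := semEq_y_of_cond hsem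
                have sx : semEq x1 x2 := keyLemma a true hNx1 hGx1 hNx2 hGx2 Hx
                have sy : semEq y1 y2 := keyLemma a false hNy1 hGy1 hNy2 hGy2 Hy
                have e1 : x1 = x2 := by
                  refine ih x1 x2 ?_ hNx1 hNx2 sx
                  have p1 := sz_pos y1
                  have p2 := sz_pos y2
                  simp only [sz] at hsz
                  omega
                have e2 : y1 = y2 := by
                  refine ih y1 y2 ?_ hNy1 hNy2 sy
                  have p1 := sz_pos x1
                  have p2 := sz_pos x2
                  simp only [sz] at hsz
                  omega
                rw [e1, e2]
              · exact absurd hsem (not_semEq_cond_cond_ne (fun e => ha e) _ _ _ _)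

end Master
/-- Soundness and completeness of CP_rp with respect to repetition-proof states. -/
theorem cprp_sound_complete (A : Type) (hA : ∃ a b : A, a ≠ b) (t t' : CE A) :
    Deriv AxRp t t' ↔
      ∀ f ∈ RPset A, reply t f = reply t' f ∧ applyCE t f = applyCE t' f := by
  constructor
  · intro h
    exact sound h
  · intro h
    have hA' : ∀ a : A, ∃ b : A, b ≠ a := by
      obtain ⟨u, v, huv⟩ := hA
      intro a
      by_cases hau : a = u
      · exact ⟨v, fun e => huv (hau ▸ e.symm)⟩
      · exact ⟨u, fun e => hau e.symm⟩
    have h1 := nf_deriv t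
    have h2 := nf_deriv t'
    have hsem : semEq (nf t) (nf t') :=
      semEq_trans (semEq_symm (sound h1)) (semEq_trans h (sound h2))
    have heq : nf t = nf t' :=
      inj hA' (sz (nf t) + sz (nf t')) (nf t) (nf t') le_rfl (nf_nrm t) (nf_nrm t') hsem
    rw [heq] at h1
    exact h1.trans (Deriv.symm h2)
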